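/- For two vertices w, x both distinct from u and v and not both in the same one of the three sets S₁ = N(u)\N(v)\{v}, S₂ = N(v)\N(u)\{u}, S₃ = N(u)∩N(v): if w and x lie in two different of these three sets, then w and x are adjacent in G ∧ uv if and only if they are non-adjacent in G; if w and x lie in the same set or at least one lies in none of the sets, their adjacency is unchanged. -/

import Mathlib

/-- Local complementation of a simple graph `G` at a vertex `u`: toggles all
edges between pairs of distinct neighbors of `u`, leaving all other edges unchanged. -/
def localComp {V : Type*} (G : SimpleGraph V) (u : V) : SimpleGraph V where
  Adj v w := v ≠ w ∧ Xor' (G.Adj v w) (G.Adj u v ∧ G.Adj u w)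
  symm := ⟨by
    rintro v w ⟨h1, h2⟩
    refine ⟨h1.symm, ?_⟩
    rwa [G.adj_comm w v, and_comm]⟩
  loopless := ⟨by rintro v ⟨h, _⟩; exact h rfl⟩

/-- The pivot of `G` along the edge `{u,v}`: `G ∧ uv = ((G * u) * v) * u`. -/
def pivot {V : Type*} (G : SimpleGraph V) (u v : V) : SimpleGraph V :=
  localComp (localComp (localComp G u) v) u

/-- `S₁ = N(u) \ N(v) \ {v}`: exclusive neighbors of `u`. -/
def S1 {V : Type*} (G : SimpleGraph V) (u v : V) : Set V :=
  {z | G.Adj u z ∧ ¬ G.Adj v z ∧ z ≠ v}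

/-- `S₂ = N(v) \ N(u) \ {u}`: exclusive neighbors of `v`. -/
def S2 {V : Type*} (G : SimpleGraph V) (u v : V) : Set V :=
  {z | G.Adj v z ∧ ¬ G.Adj u z ∧ z ≠ u}

/-- `S₃ = N(u) ∩ N(v)`: shared neighbors of `u` and `v`. -/
def S3 {V : Type*} (G : SimpleGraph V) (u v : V) : Set V :=
  {z | G.Adj u z ∧ G.Adj v z}

/-- Pivoting on `{u,v}` toggles edges between the three sets `S₁, S₂, S₃`:
if `w` and `x` (both distinct from `u, v`) lie in two different of these sets,
their adjacency is toggled; if they lie in the same set, or at least one lies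
in none of the sets, their adjacency is unchanged. -/
theorem pivot_toggles_between_sets {V : Type*} (G : SimpleGraph V) (u v : V)
    (huv : G.Adj u v) (w x : V)
    (hwu : w ≠ u) (hwv : w ≠ v) (hxu : x ≠ u) (hxv : x ≠ v) :
    (((w ∈ S1 G u v ∧ x ∈ S2 G u v) ∨ (w ∈ S1 G u v ∧ x ∈ S3 G u v) ∨
      (w ∈ S2 G u v ∧ x ∈ S1 G u v) ∨ (w ∈ S2 G u v ∧ x ∈ S3 G u v) ∨
      (w ∈ S3 G u v ∧ x ∈ S1 G u v) ∨ (w ∈ S3 G u v ∧ x ∈ S2 G u v)) →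
      ((pivot G u v).Adj w x ↔ ¬ G.Adj w x)) ∧
    (((w ∈ S1 G u v ∧ x ∈ S1 G u v) ∨ (w ∈ S2 G u v ∧ x ∈ S2 G u v) ∨
      (w ∈ S3 G u v ∧ x ∈ S3 G u v) ∨
      w ∉ S1 G u v ∪ S2 G u v ∪ S3 G u v ∨ x ∉ S1 G u v ∪ S2 G u v ∪ S3 G u v) →
      ((pivot G u v).Adj w x ↔ G.Adj w x)) := by
  have hvu : G.Adj v u := huv.symm
  have huu : ¬ G.Adj u u := G.loopless.irrefl u
  have hvv : ¬ G.Adj v v := G.loopless.irrefl v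
  have hne : u ≠ v := huv.ne
  by_cases hwx : w = x
  · subst hwx
    simp [S1, S2, S3, Set.mem_setOf_eq]
    tauto
  · have hxw : x ≠ w := fun h => hwx h.symm
    have h1 : v ≠ w := fun h => hwv h.symm
    have h2 : v ≠ x := fun h => hxv h.symm
    have h3 : u ≠ w := fun h => hwu h.symm
    have h4 : u ≠ x := fun h => hxu h.symm
    have h5 : v ≠ u := fun h => hne h.symm
    simp only [pivot, localComp, S1, S2, S3, Set.mem_setOf_eq, Set.mem_union,
      huv, hvu, huu, hvv, hwx, hxw, h1, h2, h3, h4, h5, hne, hwu, hwv, hxu, hxv,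
      ne_eq, not_false_eq_true, true_and, and_true, false_and, and_false,
      not_true, not_false_iff, or_false, false_or, not_not]
    by_cases a1 : G.Adj u w <;> by_cases a2 : G.Adj v w <;>
      by_cases a3 : G.Adj u x <;> by_cases a4 : G.Adj v x <;>
      by_cases a5 : G.Adj w x <;>
      simp_all [Xor']
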